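/- Let I be an ideal on ℕ with I ⊆ Z, where Z is the density zero ideal. Then I-statistical convergence coincides with statistical convergence: for every Hausdorff topological space X, every sequence (x_n) in X and every ℓ ∈ X, (x_n) is I-statistically convergent to ℓ if and only if {k ∈ ℕ : x_k ∉ U} ∈ Z for every neighborhood U of ℓ. -/

import Mathlib

open Filter Set Topology

/-- `λ_n(A) = |A ∩ [1,n]| / n`. -/
noncomputable def lam (n : ℕ) (A : Set ℕ) : ℝ :=
  ((A ∩ Set.Icc 1 n).ncard : ℝ) / n

/-- The density zero ideal `Z = {A ⊆ ℕ : lim_n λ_n(A) = 0}`. -/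
def Zstat : Set (Set ℕ) :=
  {A : Set ℕ | Tendsto (fun n => lam n A) atTop (nhds 0)}

/-- A (possibly improper) ideal on ℕ: contains all finite sets, closed under
subsets and finite unions. -/
def IsIdeal (I : Set (Set ℕ)) : Prop :=
  (∀ A : Set ℕ, A.Finite → A ∈ I) ∧
    (∀ ⦃A B : Set ℕ⦄, A ⊆ B → B ∈ I → A ∈ I) ∧
    (∀ ⦃A B : Set ℕ⦄, A ∈ I → B ∈ I → A ∪ B ∈ I)

/-- A proper ideal on ℕ. -/
def IsProperIdeal (I : Set (Set ℕ)) : Prop :=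
  IsIdeal I ∧ (Set.univ : Set ℕ) ∉ I

/-- `I`-statistical convergence of a sequence `x` to `l`:
`{n : λ_n({k : x_k ∉ U}) ≥ ε} ∈ I` for every neighborhood `U` of `l` and `ε > 0`. -/
def IStatConv (I : Set (Set ℕ)) {X : Type*} [TopologicalSpace X]
    (x : ℕ → X) (l : X) : Prop :=
  ∀ U ∈ nhds l, ∀ ε : ℝ, 0 < ε → {n : ℕ | ε ≤ lam n {k : ℕ | x k ∉ U}} ∈ I

lemma lam_nonneg (n : ℕ) (A : Set ℕ) : 0 ≤ lam n A :=
  div_nonneg (by positivity) (by positivity)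

lemma finite_inter_Icc (A : Set ℕ) (n : ℕ) : (A ∩ Set.Icc 1 n).Finite :=
  (Set.finite_Icc 1 n).subset inter_subset_right

/-- Membership in `Zstat` via eventual smallness. -/
lemma mem_Zstat_iff (A : Set ℕ) :
    A ∈ Zstat ↔ ∀ ε : ℝ, 0 < ε → ∀ᶠ n in atTop, lam n A < ε := by
  constructor
  · intro h ε hε
    have := h (Metric.ball_mem_nhds 0 hε)
    filter_upwards [this] with n hn
    simpa [Real.dist_eq, abs_of_nonneg (lam_nonneg n A)] using hn
  · intro h
    rw [Zstat, Set.mem_setOf_eq, Metric.tendsto_atTop]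
    intro ε hε
    obtain ⟨N, hN⟩ := (h ε hε).exists_forall_of_atTop
    exact ⟨N, fun n hn => by
      simpa [Real.dist_eq, abs_of_nonneg (lam_nonneg n A)] using hN n hn⟩

/-- if `I ⊆ Z` then `I`-statistical convergence coincides with
statistical convergence. -/
theorem stmt_7 {X : Type*} [TopologicalSpace X] [T2Space X]
    (I : Set (Set ℕ)) (hI : IsProperIdeal I) (hIZ : I ⊆ Zstat)
    (x : ℕ → X) (l : X) :
    IStatConv I x l ↔ ∀ U ∈ nhds l, {k : ℕ | x k ∉ U} ∈ Zstat := by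
  constructor
  · intro h U hU
    set A : Set ℕ := {k : ℕ | x k ∉ U} with hA
    rw [mem_Zstat_iff]
    by_contra hcon
    push_neg at hcon
    obtain ⟨ε, hε, hfreq⟩ := hcon
    -- frequently ε ≤ lam n A
    have hfreq : ∃ᶠ n in atTop, ¬ lam n A < ε := hfreq.mono fun n hn => not_lt.mpr hn
    have hfreq' : ∀ N : ℕ, ∃ n ≥ N, ε ≤ lam n A := by
      intro N
      obtain ⟨n, hn, hle⟩ := (hfreq.and_eventually (eventually_ge_atTop N)).exists
      exact ⟨n, hle, not_lt.mp hn⟩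
    set S : Set ℕ := {n : ℕ | ε / 2 ≤ lam n A} with hS
    have hSI : S ∈ I := h U hU (ε / 2) (by positivity)
    have hSZ : S ∈ Zstat := hIZ hSI
    rw [mem_Zstat_iff] at hSZ
    obtain ⟨N, hN⟩ := (hSZ (1/2) (by norm_num)).exists_forall_of_atTop
    obtain ⟨n, hnN, hεn⟩ := hfreq' (max N 1)
    have hn1 : 1 ≤ n := le_trans (le_max_right N 1) hnN
    -- for all m ∈ [n, 2n], lam m A ≥ ε/2
    have key : ∀ m ∈ Set.Icc n (2 * n), m ∈ S := by
      intro m hm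
      obtain ⟨hm1, hm2⟩ := hm
      have hmpos : (0:ℝ) < m := by
        have : 1 ≤ m := le_trans hn1 hm1
        exact_mod_cast this
      have hcard : ((A ∩ Set.Icc 1 n).ncard : ℝ) ≤ ((A ∩ Set.Icc 1 m).ncard : ℝ) := by
        exact_mod_cast Set.ncard_le_ncard
          (Set.inter_subset_inter_right _ (Set.Icc_subset_Icc_right hm1))
          (finite_inter_Icc A m)
      have hεn' : ε * n ≤ ((A ∩ Set.Icc 1 n).ncard : ℝ) := by
        have hnpos : (0:ℝ) < n := by exact_mod_cast hn1
        rw [hA] at hεn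
        have := (le_div_iff₀ hnpos).mp hεn
        linarith
      have hm2' : (m : ℝ) ≤ 2 * n := by exact_mod_cast hm2
      have : ε / 2 ≤ lam m A := by
        rw [lam, le_div_iff₀ hmpos]
        calc ε / 2 * m ≤ ε / 2 * (2 * n) := by
              apply mul_le_mul_of_nonneg_left hm2' (by positivity)
          _ = ε * n := by ring
          _ ≤ _ := le_trans hεn' hcard
      exact this
    -- then lam (2n) S ≥ (n+1)/(2n) > 1/2, contradiction
    have hsub : Set.Icc n (2 * n) ⊆ S ∩ Set.Icc 1 (2 * n) := by
      intro m hm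
      exact ⟨key m hm, le_trans hn1 hm.1, hm.2⟩
    have hcard2 : (n + 1 : ℝ) ≤ ((S ∩ Set.Icc 1 (2 * n)).ncard : ℝ) := by
      have h1 : (Set.Icc n (2 * n)).ncard = n + 1 := by
        rw [← Finset.coe_Icc, Set.ncard_coe_finset, Nat.card_Icc]
        omega
      have h2 : n + 1 ≤ (S ∩ Set.Icc 1 (2 * n)).ncard := by
        rw [← h1]
        exact Set.ncard_le_ncard hsub
          ((Set.finite_Icc 1 (2 * n)).subset Set.inter_subset_right)
      exact_mod_cast h2
    have h2nN : N ≤ 2 * n := le_trans (le_trans (le_max_left N 1) hnN) (by omega)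
    have hlt := hN (2 * n) h2nN
    have h2npos : (0:ℝ) < (2 * n : ℕ) := by
      have : 1 ≤ 2 * n := by omega
      exact_mod_cast this
    rw [lam, div_lt_iff₀ h2npos] at hlt
    have : ((2 * n : ℕ) : ℝ) = 2 * (n : ℝ) := by push_cast; ring
    rw [this] at hlt
    linarith
  · intro h U hU ε hε
    have hAZ := h U hU
    rw [mem_Zstat_iff] at hAZ
    obtain ⟨N, hN⟩ := (hAZ ε hε).exists_forall_of_atTop
    apply hI.1.1
    apply (Set.finite_Icc 0 N).subset
    intro n hn
    simp only [Set.mem_setOf_eq] at hn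
    by_contra hnot
    simp only [Set.mem_Icc, Nat.zero_le, true_and, not_le] at hnot
    exact absurd hn (not_le.mpr (hN n hnot.le))
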